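/- Let μ > 0, G ≥ 0, D ≥ 0, g, z ∈ ℝ^d with ‖g‖ ≤ G, and define h(u) = ⟨g, u⟩ + (μ/2)‖u − z‖². Then for every 0 < λ ≤ μ/(2(μD + G)²), the function u ↦ exp(−λ h(u)) is concave on the closed ball B(z, D) = {u : ‖u − z‖ ≤ D}; consequently, for every finite family of points u_1, …, u_K ∈ B(z, D) and every probability vector (p_1, …, p_K), Σ_{i=1}^K p_i exp(−λ h(u_i)) ≤ exp(−λ h(Σ_{i=1}^K p_i u_i)). -/

import Mathlib

open scoped RealInnerProductSpace

lemma oneDimExpConcave (A B C lam : ℝ) (hlam0 : 0 < lam)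
    (hb : ∀ t ∈ Set.Icc (0:ℝ) 1, lam * (2*A*t + B)^2 ≤ 2*A) :
    ConcaveOn ℝ (Set.Icc (0:ℝ) 1)
      (fun t => Real.exp (-lam * (A*t^2 + B*t + C))) := by
  have hq : ∀ t : ℝ, HasDerivAt (fun t => -lam * (A*t^2 + B*t + C))
      (-lam * (2*A*t + B)) t := by
    intro t
    have h1 : HasDerivAt (fun t : ℝ => A*t^2 + B*t + C) (2*A*t + B) t := by
      have := (((hasDerivAt_pow 2 t).const_mul A).add ((hasDerivAt_id t).const_mul B)).add_const C
      refine this.congr_deriv ?_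
      norm_num
      ring
    simpa using h1.const_mul (-lam)
  have hf : ∀ t : ℝ, HasDerivAt (fun t => Real.exp (-lam * (A*t^2 + B*t + C)))
      (Real.exp (-lam * (A*t^2 + B*t + C)) * (-lam * (2*A*t + B))) t := fun t => (hq t).exp
  have hderiv : deriv (fun t => Real.exp (-lam * (A*t^2 + B*t + C))) =
      fun t => Real.exp (-lam * (A*t^2 + B*t + C)) * (-lam * (2*A*t + B)) := by
    funext t; exact (hf t).deriv
  have hf2 : ∀ t : ℝ, HasDerivAt (fun t => Real.exp (-lam * (A*t^2 + B*t + C)) * (-lam * (2*A*t + B)))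
      (Real.exp (-lam * (A*t^2 + B*t + C)) * (lam^2 * (2*A*t + B)^2 - lam * (2*A))) t := by
    intro t
    have := (hf t).mul ((((hasDerivAt_id t).const_mul (2*A)).add_const B).const_mul (-lam))
    refine this.congr_deriv ?_
    simp only [id_eq]
    ring
  refine concaveOn_of_deriv2_nonpos' (convex_Icc 0 1) ?_ ?_ ?_
  · intro t _; exact (hf t).differentiableAt.differentiableWithinAt
  · intro t _; rw [hderiv]; exact (hf2 t).differentiableAt.differentiableWithinAt
  · intro t ht
    have : deriv^[2] (fun t => Real.exp (-lam * (A*t^2 + B*t + C))) t =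
        Real.exp (-lam * (A*t^2 + B*t + C)) * (lam^2 * (2*A*t + B)^2 - lam * (2*A)) := by
      simp only [Function.iterate_succ, Function.iterate_zero, Function.comp_apply, id]
      rw [hderiv]; exact (hf2 t).deriv
    rw [this]
    have h1 := hb t ht
    have h2 : lam^2 * (2*A*t + B)^2 - lam * (2*A) ≤ 0 := by nlinarith
    have h3 : (0:ℝ) < Real.exp (-lam * (A*t^2 + B*t + C)) := Real.exp_pos _
    nlinarith

/-- **Exp-concavity of the aggregation losses** (used in Theorems 3 and 4 of the
paper). For `h(u) = ⟨g, u⟩ + (μ/2)‖u - z‖²` with `‖g‖ ≤ G` and any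
`0 < λ ≤ μ/(2(μD + G)²)`, the function `u ↦ exp(-λ h(u))` is concave on the closed
ball `B(z, D)`; consequently the mix-loss (Jensen) inequality holds for any convex
combination of points of that ball. -/

theorem stmt9 {d : ℕ} (μ G D : ℝ) (hμ : 0 < μ) (hG : 0 ≤ G) (hD : 0 ≤ D)
    (g z : EuclideanSpace ℝ (Fin d)) (hg : ‖g‖ ≤ G)
    (h : EuclideanSpace ℝ (Fin d) → ℝ)
    (hh : ∀ u, h u = ⟪g, u⟫ + μ / 2 * ‖u - z‖ ^ 2)
    (lam : ℝ) (hlam0 : 0 < lam) (hlam : lam ≤ μ / (2 * (μ * D + G) ^ 2)) :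
    ConcaveOn ℝ (Metric.closedBall z D) (fun u => Real.exp (-lam * h u)) ∧
    ∀ (K : ℕ) (u : Fin K → EuclideanSpace ℝ (Fin d)) (p : Fin K → ℝ),
      (∀ i, 0 ≤ p i) → ∑ i, p i = 1 →
      (∀ i, u i ∈ Metric.closedBall z D) →
      ∑ i, p i * Real.exp (-lam * h (u i)) ≤
        Real.exp (-lam * h (∑ i, p i • u i)) := by
  set S := μ * D + G with hSdef
  have hS : 0 ≤ S := by positivity
  clear_value S
  rcases eq_or_lt_of_le hS with hS0 | hSpos
  · exfalso
    rw [← hS0] at hlam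
    simp at hlam
    linarith
  have hkey : lam * S^2 ≤ μ / 2 := by
    rw [le_div_iff₀ (by positivity : (0:ℝ) < 2 * S^2)] at hlam
    nlinarith
  have hcon : ConcaveOn ℝ (Metric.closedBall z D) (fun u => Real.exp (-lam * h u)) := by
    refine ⟨convex_closedBall z D, ?_⟩
    intro x hx y hy a b ha hb hab
    set v := y - x with hv
    set A := μ / 2 * ‖v‖^2 with hA
    set B := ⟪g, v⟫ + μ * ⟪x - z, v⟫ with hB
    set C := h x with hC
    have hseg : ∀ t : ℝ, t ∈ Set.Icc (0:ℝ) 1 → x + t • v ∈ Metric.closedBall z D := by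
      intro t ht
      obtain ⟨ht0, ht1⟩ := ht
      have := (convex_closedBall z D) hx hy (by linarith : (0:ℝ) ≤ 1 - t) ht0
        (by ring)
      convert this using 1
      rw [hv, smul_sub, sub_smul, one_smul]
      abel
    have hqval : ∀ t : ℝ, h (x + t • v) = A*t^2 + B*t + C := by
      intro t
      rw [hh, hC, hh]
      have hxz : x + t • v - z = (x - z) + t • v := by abel
      rw [hxz, inner_add_right, real_inner_smul_right,
        norm_add_sq_real, real_inner_smul_right, norm_smul]
      simp only [hA, hB, Real.norm_eq_abs]
      rw [mul_pow, sq_abs]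
      ring
    have hbound : ∀ t ∈ Set.Icc (0:ℝ) 1, lam * (2*A*t + B)^2 ≤ 2*A := by
      intro t ht
      set w := g + μ • (x + t • v - z) with hw
      have h1 : 2*A*t + B = ⟪w, v⟫ := by
        rw [hw, inner_add_left, real_inner_smul_left]
        have hxz : x + t • v - z = (x - z) + t • v := by abel
        rw [hxz, inner_add_left, real_inner_smul_left, real_inner_self_eq_norm_sq]
        simp only [hA, hB]
        ring
      have h2 : ‖w‖ ≤ S := by
        calc ‖w‖ ≤ ‖g‖ + ‖μ • (x + t • v - z)‖ := norm_add_le _ _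
          _ = ‖g‖ + μ * ‖x + t • v - z‖ := by rw [norm_smul, Real.norm_eq_abs, abs_of_pos hμ]
          _ ≤ G + μ * D := by
              have := hseg t ht
              rw [Metric.mem_closedBall, dist_eq_norm] at this
              have : μ * ‖x + t • v - z‖ ≤ μ * D := by
                apply mul_le_mul_of_nonneg_left this hμ.le
              linarith
          _ = S := by rw [hSdef]; ring
      have h3 : |⟪w, v⟫| ≤ S * ‖v‖ := by
        calc |⟪w, v⟫| ≤ ‖w‖ * ‖v‖ := abs_real_inner_le_norm w v
          _ ≤ S * ‖v‖ := by
              apply mul_le_mul_of_nonneg_right h2 (norm_nonneg v)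
      have h4 : (2*A*t + B)^2 ≤ S^2 * ‖v‖^2 := by
        rw [h1]
        calc ⟪w, v⟫^2 = |⟪w, v⟫|^2 := (sq_abs _).symm
          _ ≤ (S * ‖v‖)^2 := by
              apply sq_le_sq' _ h3
              linarith [abs_nonneg ⟪w, v⟫]
          _ = S^2 * ‖v‖^2 := by ring
      have h5 : lam * (2*A*t + B)^2 ≤ lam * (S^2 * ‖v‖^2) :=
        mul_le_mul_of_nonneg_left h4 hlam0.le
      have h6 : lam * (S^2 * ‖v‖^2) ≤ μ / 2 * ‖v‖^2 := by
        have := mul_le_mul_of_nonneg_right hkey (sq_nonneg ‖v‖)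
        nlinarith
      calc lam * (2*A*t + B)^2 ≤ lam * (S^2 * ‖v‖^2) := h5
        _ ≤ μ / 2 * ‖v‖^2 := h6
        _ ≤ 2*A := by rw [hA]; nlinarith [sq_nonneg ‖v‖]
    have hφ := oneDimExpConcave A B C lam hlam0 hbound
    have h01 : (0:ℝ) ∈ Set.Icc (0:ℝ) 1 := by norm_num
    have h11 : (1:ℝ) ∈ Set.Icc (0:ℝ) 1 := by norm_num
    have key := hφ.2 h01 h11 ha hb hab
    have e0 : h x = A*0^2 + B*0 + C := by
      have := hqval 0; rw [zero_smul, add_zero] at this; exact this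
    have e1 : h y = A*1^2 + B*1 + C := by
      have := hqval 1
      rw [one_smul] at this
      rw [← this]
      congr 1
      rw [hv]; abel
    have eb : h (a • x + b • y) = A*b^2 + B*b + C := by
      rw [← hqval b]
      congr 1
      rw [hv, smul_sub]
      have hab' : a = 1 - b := by linarith
      rw [hab', sub_smul, one_smul]
      abel
    dsimp only
    rw [e0, e1, eb]
    have hab2 : a • (0:ℝ) + b • (1:ℝ) = b := by simp
    rw [hab2] at key
    exact key
  refine ⟨hcon, ?_⟩
  intro K u p hp hsum hmem
  have := hcon.le_map_sum (t := Finset.univ) (w := p) (p := u)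
    (fun i _ => hp i) hsum (fun i _ => hmem i)
  simpa [smul_eq_mul] using this
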